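/- Let a_i > 0, b_i > 0, μ_i > 0 for i ∈ ℤ with μ_i b_i = μ_{i+1} a_{i+1}, fix θ ∈ ℤ and λ > 0, and assume ∑_{i=θ}^∞ μ_i = ∞. Then there is no g : ℤ → ℝ that is positive, nondecreasing, and satisfies b_i(g_{i+1} − g_i) + a_i(g_{i−1} − g_i) = −λ g_i for all i ∈ ℤ. -/

import Mathlib

/-- Nonexistence of a positive nondecreasing eigenfunction for a birth–death
operator on `ℤ` when the symmetrizing measure has infinite right tail
`∑_{i=θ}^∞ μ i = ∞`. -/
theorem stmt_9 (a b μ : ℤ → ℝ) (θ : ℤ) (lam : ℝ)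
    (ha : ∀ i, 0 < a i) (hb : ∀ i, 0 < b i) (hμ : ∀ i, 0 < μ i)
    (hsym : ∀ i, μ i * b i = μ (i + 1) * a (i + 1)) (hlam : 0 < lam)
    (hdiv : Filter.Tendsto (fun n : ℕ => ∑ i ∈ Finset.Icc θ (θ + n), μ i)
      Filter.atTop Filter.atTop) :
    ¬ ∃ g : ℤ → ℝ, (∀ i, 0 < g i) ∧ (∀ i, g i ≤ g (i + 1)) ∧
      (∀ i, b i * (g (i + 1) - g i) + a i * (g (i - 1) - g i) = -lam * g i) := by
  rintro ⟨g, hpos, hmono, heq⟩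
  have hgmono : Monotone g := monotone_int_of_le_succ hmono
  set h : ℤ → ℝ := fun i => μ i * a i * (g i - g (i - 1)) with hh
  -- recurrence for h
  have hrec : ∀ i : ℤ, h (i + 1) - h i = -lam * (μ i * g i) := by
    intro i
    have e := heq i
    have : μ i * (b i * (g (i + 1) - g i) + a i * (g (i - 1) - g i)) =
        μ i * (-lam * g i) := by rw [e]
    simp only [hh]
    have hsi := hsym i
    have : (i + 1 - 1 : ℤ) = i := by ring
    rw [this, ← hsi]
    linear_combination μ i * e
  have hhnn : ∀ i : ℤ, 0 ≤ h i := by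
    intro i
    have h1 : g (i - 1) ≤ g i := hgmono (by omega)
    simp only [hh]
    exact mul_nonneg (mul_nonneg (hμ i).le (ha i).le) (by linarith)
  -- telescoping
  have htel : ∀ n : ℕ, h θ - h (θ + n + 1) =
      lam * ∑ i ∈ Finset.Icc θ (θ + (n : ℤ)), μ i * g i := by
    intro n
    induction n with
    | zero =>
      simp only [Nat.cast_zero, add_zero, Finset.Icc_self, Finset.sum_singleton]
      have := hrec θ
      linarith
    | succ n ih =>
      have hins : Finset.Icc θ (θ + ((n : ℤ) + 1)) =
          insert (θ + (n : ℤ) + 1) (Finset.Icc θ (θ + (n : ℤ))) := by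
        ext x; simp only [Finset.mem_Icc, Finset.mem_insert]; omega
      push_cast
      rw [hins, Finset.sum_insert (by simp only [Finset.mem_Icc]; omega)]
      have := hrec (θ + (n : ℤ) + 1)
      have h2 : (θ + ((n : ℤ) + 1) + 1) = (θ + (n : ℤ) + 1 + 1) := by ring
      rw [h2]
      push_cast at ih
      linarith
  -- bound on the partial sums
  have hbound : ∀ n : ℕ, ∑ i ∈ Finset.Icc θ (θ + (n : ℤ)), μ i ≤
      h θ / (lam * g θ) := by
    intro n
    have hsumle : g θ * ∑ i ∈ Finset.Icc θ (θ + (n : ℤ)), μ i ≤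
        ∑ i ∈ Finset.Icc θ (θ + (n : ℤ)), μ i * g i := by
      rw [Finset.mul_sum]
      apply Finset.sum_le_sum
      intro i hi
      rw [Finset.mem_Icc] at hi
      have := hgmono hi.1
      nlinarith [(hμ i).le]
    have h1 : lam * ∑ i ∈ Finset.Icc θ (θ + (n : ℤ)), μ i * g i ≤ h θ := by
      have := htel n
      have := hhnn (θ + n + 1)
      linarith
    rw [le_div_iff₀ (mul_pos hlam (hpos θ))]
    calc (∑ i ∈ Finset.Icc θ (θ + (n : ℤ)), μ i) * (lam * g θ)
        = lam * (g θ * ∑ i ∈ Finset.Icc θ (θ + (n : ℤ)), μ i) := by ring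
      _ ≤ lam * ∑ i ∈ Finset.Icc θ (θ + (n : ℤ)), μ i * g i := by
          exact mul_le_mul_of_nonneg_left hsumle hlam.le
      _ ≤ h θ := h1
  -- contradiction with divergence
  obtain ⟨n, hn⟩ := (hdiv.eventually (Filter.eventually_gt_atTop
    (h θ / (lam * g θ)))).exists
  exact absurd (hbound n) (not_le.mpr hn)
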